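/- Börjeson's braces b_k^Δ satisfy the recursion b_{k+1}^Δ(a₁,…,a_{k+1}) = b_k^Δ(a₁, a₂a₃, a₄, …, a_{k+1}) for k ≥ 3; consequently if b_k^Δ = 0 identically then b_{k+1}^Δ = 0 identically (hereditarity). -/

import Mathlib

/- STATEMENT 3: Börjeson's braces
`b_k^Δ(a₁,…,a_k) = Δ(a₁⋯a_k) − Δ(a₁⋯a_{k−1})a_k − (−1)^{|a₁|}a₁Δ(a₂⋯a_k)
                  + (−1)^{|a₁|}a₁Δ(a₂⋯a_{k−1})a_k`  (k ≥ 3)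
satisfy `b_{k+1}^Δ(a₁,…,a_{k+1}) = b_k^Δ(a₁, a₂a₃, a₄, …, a_{k+1})` for `k ≥ 3`;
consequently if `b_k^Δ = 0` identically then `b_{k+1}^Δ = 0` identically. -/

/-- Börjeson's brace `b_{n+1}^Δ` (the formula valid for `n+1 ≥ 3`); `d₀` is the degree
of the first argument. -/
noncomputable def borjeson {K A : Type} [Field K] [Ring A] [Algebra K A]
    (Δ : A →ₗ[K] A) (d₀ : ℤ) {n : ℕ} (a : Fin (n+1) → A) : A :=
  Δ (List.ofFn a).prod
    - Δ ((List.ofFn a).dropLast.prod) * a (Fin.last n)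
    - (d₀.negOnePow : ℤ) • (a 0 * Δ (((List.ofFn a).drop 1).prod))
    + (d₀.negOnePow : ℤ) • (a 0 * Δ (((List.ofFn a).drop 1).dropLast.prod) * a (Fin.last n))

lemma borjeson_aux {K A : Type} [Field K] [Ring A] [Algebra K A]
    (Δ : A →ₗ[K] A) (d₀ : ℤ) (m : ℕ) (a : Fin (m+4) → A) :
    borjeson Δ d₀ a =
      borjeson Δ d₀ (Fin.cons (a 0) (Fin.cons (a 1 * a 2)
        (fun i : Fin (m+1) => a i.succ.succ.succ))) := by
  obtain ⟨x, l, hl⟩ : ∃ x l, List.ofFn (fun i : Fin (m+1) => a i.succ.succ.succ) = x :: l :=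
    ⟨_, _, List.ofFn_succ⟩
  have h1 : List.ofFn a = a 0 :: a 1 :: a 2 :: x :: l := by
    rw [← hl]; simp [List.ofFn_succ]
  have h2 : List.ofFn (Fin.cons (a 0) (Fin.cons (a 1 * a 2) (fun i : Fin (m+1) => a i.succ.succ.succ))) = a 0 :: (a 1 * a 2) :: x :: l := by
    rw [← hl]; simp [List.ofFn_succ]
  have h3 : (Fin.cons (a 0) (Fin.cons (a 1 * a 2) (fun i : Fin (m+1) => a i.succ.succ.succ)) : Fin (m+3) → A) (Fin.last (m+2)) = a (Fin.last (m+3)) := by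
    rw [← Fin.succ_last, Fin.cons_succ, ← Fin.succ_last, Fin.cons_succ]
    simp [Fin.succ_last]
  unfold borjeson
  rw [h1, h2, h3, Fin.cons_zero]
  simp [List.dropLast, mul_assoc]

theorem borjeson_recursion_and_hereditary
    (K : Type) [Field K] [CharZero K]
    (A : Type) [Ring A] [Algebra K A]
    (𝒜 : ℤ → Submodule K A) [GradedAlgebra 𝒜]
    (Δ : A →ₗ[K] A)
    (hΔ : ∀ (i : ℤ) (x : A), x ∈ 𝒜 i → Δ x ∈ 𝒜 (i + 1)) :
    -- the recursion b_{k+1}(a₁,…,a_{k+1}) = b_k(a₁, a₂a₃, a₄,…,a_{k+1}) for k = m+3 ≥ 3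
    (∀ (m : ℕ) (d : Fin (m+4) → ℤ) (a : Fin (m+4) → A), (∀ j, a j ∈ 𝒜 (d j)) →
      borjeson Δ (d 0) a =
        borjeson Δ (d 0)
          (Fin.cons (a 0) (Fin.cons (a 1 * a 2)
            (fun i : Fin (m+1) => a i.succ.succ.succ))))
    ∧
    -- consequently, hereditarity for k = m+3 ≥ 3
    (∀ (m : ℕ),
      (∀ (d : Fin (m+3) → ℤ) (a : Fin (m+3) → A), (∀ j, a j ∈ 𝒜 (d j)) →
        borjeson Δ (d 0) a = 0) →
      (∀ (d : Fin (m+4) → ℤ) (a : Fin (m+4) → A), (∀ j, a j ∈ 𝒜 (d j)) →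
        borjeson Δ (d 0) a = 0)) := by
  constructor
  · intro m d a _
    exact borjeson_aux Δ (d 0) m a
  · intro m h d a ha
    rw [borjeson_aux Δ (d 0) m a]
    have := h (Fin.cons (d 0) (Fin.cons (d 1 + d 2) (fun i : Fin (m+1) => d i.succ.succ.succ)))
      (Fin.cons (a 0) (Fin.cons (a 1 * a 2) (fun i : Fin (m+1) => a i.succ.succ.succ)))
      (by
        intro j
        refine Fin.cases ?_ (fun j => ?_) j
        · simpa using ha 0
        · refine Fin.cases ?_ (fun j => ?_) j
          · simpa using SetLike.mul_mem_graded (ha 1) (ha 2)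
          · simpa using ha j.succ.succ.succ)
    simpa using this
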